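/- Let A be an n×n complex positive definite matrix and B an n×n complex positive semidefinite matrix. Then det(A#B) = sqrt(det(A)·det(B)), where det(A) and det(B) are the (real, nonnegative) determinants of A and B. -/

import Mathlib

open Matrix
open scoped ComplexOrder
open scoped Classical

/-- The positive semidefinite square root of a positive semidefinite matrix
(junk value `0` if the matrix is not positive semidefinite). -/
noncomputable def psdSqrt {n : ℕ} (X : Matrix (Fin n) (Fin n) ℂ) : Matrix (Fin n) (Fin n) ℂ :=
  if h : X.PosSemidef then
    h.1.eigenvectorUnitary.1 * diagonal ((↑) ∘ Real.sqrt ∘ h.1.eigenvalues) *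
      (star h.1.eigenvectorUnitary : Matrix (Fin n) (Fin n) ℂ)
  else 0

/-- The matrix geometric mean `A # B = A^{1/2} (A^{-1/2} B A^{-1/2})^{1/2} A^{1/2}`,
where `A^{-1/2} = (A^{1/2})⁻¹`. -/
noncomputable def geomMean {n : ℕ} (A B : Matrix (Fin n) (Fin n) ℂ) :
    Matrix (Fin n) (Fin n) ℂ :=
  psdSqrt A * psdSqrt ((psdSqrt A)⁻¹ * B * (psdSqrt A)⁻¹) * psdSqrt A

noncomputable def Matrix.PosSemidef.sqrt {n : ℕ} {X : Matrix (Fin n) (Fin n) ℂ} (h : X.PosSemidef) :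
    Matrix (Fin n) (Fin n) ℂ :=
  h.1.eigenvectorUnitary.1 * diagonal ((↑) ∘ Real.sqrt ∘ h.1.eigenvalues) *
    (star h.1.eigenvectorUnitary : Matrix (Fin n) (Fin n) ℂ)

lemma Matrix.PosSemidef.posSemidef_sqrt {n : ℕ} {X : Matrix (Fin n) (Fin n) ℂ}
    (h : X.PosSemidef) : h.sqrt.PosSemidef := by
  have hD : (diagonal ((↑) ∘ Real.sqrt ∘ h.1.eigenvalues : Fin n → ℂ)).PosSemidef :=
    posSemidef_diagonal_iff.mpr fun i => by simp [Complex.zero_le_real, Real.sqrt_nonneg]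
  have := hD.mul_mul_conjTranspose_same (h.1.eigenvectorUnitary : Matrix (Fin n) (Fin n) ℂ)
  rw [Matrix.PosSemidef.sqrt, Matrix.star_eq_conjTranspose]
  exact this

lemma Matrix.PosSemidef.sq_sqrt {n : ℕ} {X : Matrix (Fin n) (Fin n) ℂ}
    (h : X.PosSemidef) : h.sqrt ^ 2 = X := by
  let C : Matrix (Fin n) (Fin n) ℂ := h.1.eigenvectorUnitary
  let E := diagonal ((↑) ∘ Real.sqrt ∘ h.1.eigenvalues : Fin n → ℂ)
  have hC : star C * C = 1 := Unitary.coe_star_mul_self _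
  have hE : E * E = diagonal ((↑) ∘ h.1.eigenvalues) := by
    rw [diagonal_mul_diagonal]; congr 1; funext i
    simp only [Function.comp_apply]
    rw [← Complex.ofReal_mul, Real.mul_self_sqrt (h.eigenvalues_nonneg i)]
  have key : C * E * star C * (C * E * star C) = C * (E * (star C * C) * E) * star C := by
    simp only [mul_assoc]
  rw [Matrix.PosSemidef.sqrt, pow_two]
  change C * E * star C * (C * E * star C) = X
  rw [key, hC, mul_one, hE]
  conv_rhs => rw [h.1.spectral_theorem, Unitary.conjStarAlgAut_apply]
  rfl

lemma psd_det_nonneg {n : ℕ} {X : Matrix (Fin n) (Fin n) ℂ} (h : X.PosSemidef) :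
    0 ≤ X.det := by
  rw [h.isHermitian.det_eq_prod_eigenvalues]
  exact Finset.prod_nonneg fun i _ => Complex.zero_le_real.mpr (h.eigenvalues_nonneg i)

lemma psd_det_eq_re {n : ℕ} {X : Matrix (Fin n) (Fin n) ℂ} (h : X.PosSemidef) :
    X.det = (X.det.re : ℂ) := by
  have := (Complex.nonneg_iff.mp (psd_det_nonneg h)).2
  exact Complex.ext rfl this.symm

lemma det_sqrt {n : ℕ} {X : Matrix (Fin n) (Fin n) ℂ} (h : X.PosSemidef) :
    h.sqrt.det = (Real.sqrt X.det.re : ℂ) := by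
  have hsq : h.sqrt.det ^ 2 = X.det := by
    rw [← det_pow, h.sq_sqrt]
  have hs := psd_det_nonneg h.posSemidef_sqrt
  have hre : h.sqrt.det = (h.sqrt.det.re : ℂ) := psd_det_eq_re h.posSemidef_sqrt
  have hre_nonneg : 0 ≤ h.sqrt.det.re := (Complex.nonneg_iff.mp hs).1
  have hXd : X.det = ((h.sqrt.det.re ^ 2 : ℝ) : ℂ) := by
    rw [← hsq, hre]; norm_cast
  have : X.det.re = h.sqrt.det.re ^ 2 := by rw [hXd, Complex.ofReal_re]
  rw [this, Real.sqrt_sq hre_nonneg, ← hre]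

/-- det(A#B) = sqrt(det A · det B) for A positive definite and B positive
semidefinite (the determinants of A and B being real and nonnegative). -/
theorem det_geomMean {n : ℕ}
    (A B : Matrix (Fin n) (Fin n) ℂ) (hA : A.PosDef) (hB : B.PosSemidef) :
    (geomMean A B).det = (Real.sqrt (A.det.re * B.det.re) : ℂ) := by
  have hApsd := hA.posSemidef
  set S := hApsd.sqrt with hS
  have hSpsd : S.PosSemidef := hApsd.posSemidef_sqrt
  have hSA : psdSqrt A = S := dif_pos hApsd
  have ha : 0 < A.det.re := by
    have := hA.det_pos
    exact (Complex.lt_def.mp this).1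
  have hb : 0 ≤ B.det.re := (Complex.nonneg_iff.mp (psd_det_nonneg hB)).1
  have hAdet : A.det = (A.det.re : ℂ) := psd_det_eq_re hApsd
  have hBdet : B.det = (B.det.re : ℂ) := psd_det_eq_re hB
  have hSdet : S.det = (Real.sqrt A.det.re : ℂ) := det_sqrt hApsd
  have hSdet_ne : S.det ≠ 0 := by
    rw [hSdet]
    exact_mod_cast (Real.sqrt_pos.mpr ha).ne'
  -- inner matrix is PSD
  have hSH : S⁻¹ᴴ = S⁻¹ := by
    rw [conjTranspose_nonsing_inv, hSpsd.isHermitian.eq]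
  have hM : (S⁻¹ * B * S⁻¹).PosSemidef := by
    have := hB.mul_mul_conjTranspose_same S⁻¹
    rwa [hSH] at this
  have hMdet : (S⁻¹ * B * S⁻¹).det = ((B.det.re / A.det.re : ℝ) : ℂ) := by
    rw [det_mul, det_mul, det_nonsing_inv, Ring.inverse_eq_inv', hSdet, hBdet]
    have h1 : ((Real.sqrt A.det.re : ℝ) : ℂ) ≠ 0 := by
      exact_mod_cast (Real.sqrt_pos.mpr ha).ne'
    have h2 : ((A.det.re : ℝ) : ℂ) ≠ 0 := by exact_mod_cast ha.ne'
    push_cast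
    field_simp
    rw [Complex.ofReal_re, ← Complex.ofReal_pow, Real.sq_sqrt ha.le]
    push_cast
    ring
  have hMre : (S⁻¹ * B * S⁻¹).det.re = B.det.re / A.det.re := by
    rw [hMdet]; simp
  have hsM : psdSqrt (S⁻¹ * B * S⁻¹) = hM.sqrt := dif_pos hM
  rw [geomMean, hSA, hsM, det_mul, det_mul, hSdet, det_sqrt hM, hMre]
  rw [← Complex.ofReal_mul, ← Complex.ofReal_mul]
  congr 1
  rw [← Real.sqrt_mul ha.le, ← Real.sqrt_mul (by positivity)]
  congr 1
  field_simp
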